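/- Let Ỹ and Λ be finite-dimensional real inner product spaces, B : Ỹ → Λ a continuous linear map, C ⊆ Ỹ a nonempty closed convex set, and H : Ỹ → ℝ a convex continuous function. Let τ, σ > 0 satisfy τ σ ‖B‖² < 1, where ‖B‖ is the operator norm. Define the Lagrangian L(p, λ) = H(p) + ⟨B p, λ⟩ for p ∈ C and λ ∈ Λ. Let p₋₁ = p₀ ∈ C and λ₀ ∈ Λ, and for each n ≥ 0 set λ_{n+1} = λ_n + σ B(2 p_n − p_{n−1}) and let p_{n+1} be a minimizer over C of q ↦ H(q) + (1/(2τ)) ‖q − (p_n − τ B^* λ_{n+1})‖². Then for every n ≥ 1, every p ∈ C, and every λ ∈ Λ, the ergodic averages p̄_n = (1/n) Σ_{i=1}^n p_i (which lies in C) and λ̄_n = (1/n) Σ_{i=1}^n λ_i satisfy L(p̄_n, λ) − L(p, λ̄_n) ≤ (1/n) ( (1/τ) ‖p − p₀‖² + (1/σ) ‖λ − λ₀‖² ). -/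

import Mathlib

open Filter Topology

section CPHelpers

variable {Y Λ : Type*} [NormedAddCommGroup Y] [InnerProductSpace ℝ Y]
  [NormedAddCommGroup Λ] [InnerProductSpace ℝ Λ]

/-- If `a` minimizes `q ↦ H q + (1/(2τ))‖q-w‖²` over convex `C`, then the strong-convexity
improved inequality holds. -/
lemma cp_strong_min {C : Set Y} (hC : Convex ℝ C) {H : Y → ℝ} (hH : ConvexOn ℝ Set.univ H)
    {τ : ℝ} (hτ : 0 < τ) (w a : Y) (ha : a ∈ C)
    (hmin : ∀ q ∈ C, H a + (1/(2*τ)) * ‖a - w‖^2 ≤ H q + (1/(2*τ)) * ‖q - w‖^2)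
    {q : Y} (hq : q ∈ C) :
    H a + (1/(2*τ)) * ‖a - w‖^2 + (1/(2*τ)) * ‖q - a‖^2
      ≤ H q + (1/(2*τ)) * ‖q - w‖^2 := by
  set c : ℝ := 1/(2*τ) with hc
  have hcpos : 0 < c := by positivity
  set I : ℝ := inner ℝ (a - w) (q - a) with hI
  set Q : ℝ := ‖q - a‖^2 with hQ
  -- ‖q - w‖² = ‖a-w‖² + 2 I + Q
  have hqw : ‖q - w‖^2 = ‖a - w‖^2 + 2*I + Q := by
    have : q - w = (a - w) + (q - a) := by abel
    rw [this, norm_add_sq_real]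
  -- key : H a ≤ H q + 2*c*I
  have key : H a ≤ H q + 2*c*I := by
    have hstep : ∀ t : ℝ, 0 < t → t < 1 → H a ≤ H q + 2*c*I + c*t*Q := by
      intro t ht0 ht1
      have hm : a + t • (q - a) ∈ C := by
        have := hC ha hq (by linarith : (0:ℝ) ≤ 1 - t) (le_of_lt ht0) (by ring)
        convert this using 1
        rw [smul_sub]
        module
      have hmin' := hmin _ hm
      have hHm : H (a + t • (q - a)) ≤ (1-t) * H a + t * H q := by
        have := hH.2 (Set.mem_univ a) (Set.mem_univ q) (by linarith : (0:ℝ) ≤ 1 - t)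
          (le_of_lt ht0) (by ring)
        rw [show a + t • (q - a) = (1-t) • a + t • q by rw [smul_sub]; module]
        simpa only [smul_eq_mul] using this
      have hnorm : ‖a + t • (q - a) - w‖^2 = ‖a - w‖^2 + 2*t*I + t^2*Q := by
        have : a + t • (q - a) - w = (a - w) + t • (q - a) := by abel
        rw [this, norm_add_sq_real, real_inner_smul_right, norm_smul]
        simp [hI, hQ, mul_pow, abs_of_pos ht0]
        ring
      rw [hnorm] at hmin'
      have : t * H a ≤ t * H q + c * (2*t*I + t^2*Q) := by nlinarith
      have h2 : H a ≤ H q + c * (2*I + t*Q) := by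
        have := mul_le_mul_of_nonneg_left this (le_of_lt (inv_pos.mpr ht0))
        rw [mul_add, mul_add] at this
        field_simp at this ⊢
        nlinarith
      nlinarith
    have htend : Tendsto (fun t : ℝ => H q + 2*c*I + c*t*Q) (𝓝[>] (0:ℝ))
        (𝓝 (H q + 2*c*I)) := by
      have : Tendsto (fun t : ℝ => H q + 2*c*I + c*t*Q) (𝓝 (0:ℝ))
          (𝓝 (H q + 2*c*I + c*0*Q)) := by
        apply Continuous.tendsto
        continuity
      simpa using this.mono_left nhdsWithin_le_nhds
    refine ge_of_tendsto htend ?_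
    filter_upwards [Ioo_mem_nhdsGT_of_mem (by norm_num : (0:ℝ) ∈ Set.Ico (0:ℝ) 1)] with t ht
    exact hstep t ht.1 ht.2
  rw [hqw]; nlinarith

/-- Dual exact identity. -/
lemma cp_dual_id {σ : ℝ} (hσ : 0 < σ) (v : Λ) (lamn mu : Λ) :
    (inner ℝ v (mu - (lamn + σ • v)) : ℝ)
      = (1/(2*σ)) * (‖mu - lamn‖^2 - ‖(lamn + σ • v) - lamn‖^2 - ‖mu - (lamn + σ • v)‖^2) := by
  set u : Λ := mu - lamn with hu
  have h1 : mu - (lamn + σ • v) = u - σ • v := by rw [hu]; abel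
  have h2 : (lamn + σ • v) - lamn = σ • v := by abel
  have e1 : ‖u - σ • v‖^2 = ‖u‖^2 - 2*(σ*(inner ℝ u v : ℝ)) + σ^2*‖v‖^2 := by
    rw [norm_sub_sq_real, real_inner_smul_right, norm_smul, Real.norm_eq_abs,
      abs_of_pos hσ, mul_pow]
  have e2 : (inner ℝ v (u - σ • v) : ℝ) = (inner ℝ v u : ℝ) - σ * ‖v‖^2 := by
    rw [inner_sub_right, real_inner_smul_right, real_inner_self_eq_norm_sq]
  have e3 : ‖σ • v‖^2 = σ^2 * ‖v‖^2 := by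
    rw [norm_smul, Real.norm_eq_abs, abs_of_pos hσ, mul_pow]
  rw [h1, h2, e1, e2, e3, real_inner_comm v u]
  field_simp
  ring

/-- Cross identity. -/
lemma cp_cross_id (B : Y →L[ℝ] Λ) (pn pm1 a : Y) (lamn lam1 mu : Λ) :
    (inner ℝ (B a) (mu - lam1) : ℝ)
      = (inner ℝ (B ((2:ℝ) • pn - pm1)) (mu - lam1) : ℝ)
        + (inner ℝ (B (a - pn)) (mu - lam1) : ℝ)
        - (inner ℝ (B (pn - pm1)) (mu - lamn) : ℝ)
        + (inner ℝ (B (pn - pm1)) (lam1 - lamn) : ℝ) := by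
  have h1 : (B a : Λ) = B ((2:ℝ) • pn - pm1) + B (a - pn) - B (pn - pm1) := by
    rw [← map_add, ← map_sub]; congr 1; module
  have h2 : (inner ℝ (B (pn - pm1)) (lam1 - lamn) : ℝ)
      - (inner ℝ (B (pn - pm1)) (mu - lamn) : ℝ)
      = - (inner ℝ (B (pn - pm1)) (mu - lam1) : ℝ) := by
    rw [← inner_sub_right]
    have h3 : (lam1 - lamn) - (mu - lamn) = -(mu - lam1) := by abel
    rw [h3, inner_neg_right]
  rw [h1, inner_sub_left, inner_add_left]
  linarith

/-- AM–GM absorption bound. -/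
lemma cp_amgm {τ σ K : ℝ} (hτ : 0 < τ) (hσ : 0 < σ) (hK : 0 ≤ K)
    (hτσ : τ * σ * K ^ 2 ≤ 1) {a b : ℝ} (ha : 0 ≤ a) (hb : 0 ≤ b) :
    K * a * b ≤ (1/(2*τ)) * a^2 + (1/(2*σ)) * b^2 := by
  set s : ℝ := Real.sqrt τ * Real.sqrt σ with hs
  have hs0 : 0 ≤ s := by positivity
  have hs2 : s^2 = τ * σ := by
    rw [hs, mul_pow, Real.sq_sqrt hτ.le, Real.sq_sqrt hσ.le]
  have hsK : s * K ≤ 1 := by nlinarith [sq_nonneg (s*K - 1)]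
  have key : 2 * (τ*σ) * K * a * b ≤ σ * a^2 + τ * b^2 := by
    have h1 : 0 ≤ (Real.sqrt σ * a - Real.sqrt τ * b)^2 := sq_nonneg _
    have h2 : (Real.sqrt σ * a - Real.sqrt τ * b)^2
        = σ * a^2 + τ * b^2 - 2 * s * (a*b) := by
      rw [sub_sq, mul_pow, mul_pow, Real.sq_sqrt hτ.le, Real.sq_sqrt hσ.le, hs]
      ring
    have h3 : 0 ≤ 2 * (a*b) * (s * (1 - s*K)) := by
      apply mul_nonneg (by positivity)
      exact mul_nonneg hs0 (by linarith)
    calc 2 * (τ*σ) * K * a * b = 2*s^2*K*(a*b) := by rw [hs2]; ring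
      _ ≤ 2*s*(a*b) := by nlinarith [h3]
      _ ≤ σ * a^2 + τ * b^2 := by nlinarith [h1, h2]
  have h4 : (0:ℝ) < 2 * τ * σ := by positivity
  have h6 : (1/(2*τ))*a^2 + (1/(2*σ))*b^2 - K*a*b
      = (σ*a^2 + τ*b^2 - 2*(τ*σ)*K*a*b) / (2*τ*σ) := by
    field_simp
  have h7 : 0 ≤ (σ*a^2 + τ*b^2 - 2*(τ*σ)*K*a*b) / (2*τ*σ) :=
    div_nonneg (by linarith) h4.le
  linarith

/-- Expansion of the prox quadratic term. -/
lemma cp_expand [CompleteSpace Y] [CompleteSpace Λ]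
    (B : Y →L[ℝ] Λ) {τ : ℝ} (hτ : 0 < τ) (pn x : Y) (lam1 : Λ) :
    (1/(2*τ)) * ‖x - (pn - τ • (ContinuousLinearMap.adjoint B) lam1)‖^2
      = (1/(2*τ)) * ‖x - pn‖^2 + (inner ℝ (B x) lam1 : ℝ) - (inner ℝ (B pn) lam1 : ℝ)
        + (τ/2) * ‖(ContinuousLinearMap.adjoint B) lam1‖^2 := by
  have h1 : x - (pn - τ • (ContinuousLinearMap.adjoint B) lam1)
      = (x - pn) + τ • (ContinuousLinearMap.adjoint B) lam1 := by abel
  rw [h1, norm_add_sq_real, real_inner_smul_right, norm_smul, Real.norm_eq_abs,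
    abs_of_pos hτ, mul_pow]
  have h2 : (inner ℝ (x - pn) ((ContinuousLinearMap.adjoint B) lam1) : ℝ)
      = (inner ℝ (B x) lam1 : ℝ) - (inner ℝ (B pn) lam1 : ℝ) := by
    rw [ContinuousLinearMap.adjoint_inner_right, map_sub, inner_sub_left]
  rw [h2]
  field_simp
  ring

end CPHelpers

/-- `O(1/n)` ergodic convergence estimate for the first-order primal-dual
(Chambolle–Pock) iteration applied to `min_{p ∈ C} max_λ { H(p) + ⟨B p, λ⟩ }`.
The sequence is indexed so that `p 0 = p₀` also plays the role of `p₋₁`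
(note `0 - 1 = 0` in `ℕ`, encoding `p₋₁ = p₀`). -/
theorem chambolle_pock_ergodic_estimate
    {Y Λ : Type*} [NormedAddCommGroup Y] [InnerProductSpace ℝ Y] [FiniteDimensional ℝ Y]
    [NormedAddCommGroup Λ] [InnerProductSpace ℝ Λ] [FiniteDimensional ℝ Λ]
    (B : Y →L[ℝ] Λ) (C : Set Y) (hCne : C.Nonempty) (hCclosed : IsClosed C)
    (hCconvex : Convex ℝ C)
    (H : Y → ℝ) (hHconvex : ConvexOn ℝ Set.univ H) (hHcont : Continuous H)
    (τ σ : ℝ) (hτ : 0 < τ) (hσ : 0 < σ) (hτσ : τ * σ * ‖B‖ ^ 2 < 1)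
    (p : ℕ → Y) (lam : ℕ → Λ) (hp0 : p 0 ∈ C)
    (hlam : ∀ n : ℕ, lam (n + 1) = lam n + σ • B ((2 : ℝ) • p n - p (n - 1)))
    (hpmem : ∀ n : ℕ, p (n + 1) ∈ C)
    (hpmin : ∀ n : ℕ, ∀ q ∈ C,
      H (p (n + 1)) + (1 / (2 * τ)) *
          ‖p (n + 1) - (p n - τ • (ContinuousLinearMap.adjoint B) (lam (n + 1)))‖ ^ 2 ≤
        H q + (1 / (2 * τ)) *
          ‖q - (p n - τ • (ContinuousLinearMap.adjoint B) (lam (n + 1)))‖ ^ 2) :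
    ∀ n : ℕ, 1 ≤ n → ∀ q ∈ C, ∀ mu : Λ,
      ((n : ℝ)⁻¹ • ∑ i ∈ Finset.range n, p (i + 1)) ∈ C ∧
      (H ((n : ℝ)⁻¹ • ∑ i ∈ Finset.range n, p (i + 1)) +
          (inner ℝ (B ((n : ℝ)⁻¹ • ∑ i ∈ Finset.range n, p (i + 1))) mu : ℝ)) -
        (H q + (inner ℝ (B q) ((n : ℝ)⁻¹ • ∑ i ∈ Finset.range n, lam (i + 1)) : ℝ)) ≤
      (1 / (n : ℝ)) * ((1 / τ) * ‖q - p 0‖ ^ 2 + (1 / σ) * ‖mu - lam 0‖ ^ 2) := by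
  intro n hn q hq mu
  have hn0 : (0:ℝ) < (n:ℝ) := by exact_mod_cast hn
  have hnne : (n:ℝ) ≠ 0 := ne_of_gt hn0
  set c : ℝ := 1/(2*τ) with hc
  set d : ℝ := 1/(2*σ) with hd
  have hcpos : 0 < c := by rw [hc]; positivity
  have hdpos : 0 < d := by rw [hd]; positivity
  -- the telescoping potential
  set Ψ : ℕ → ℝ := fun i => c*‖q - p i‖^2 + d*‖mu - lam i‖^2
      + c*‖p i - p (i-1)‖^2 - (inner ℝ (B (p i - p (i-1))) (mu - lam i) : ℝ) with hΨ
  -- cross bound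
  have hcross : ∀ (u : Y) (w : Λ),
      (inner ℝ (B u) w : ℝ) ≤ c*‖u‖^2 + d*‖w‖^2 := by
    intro u w
    have h1 : (inner ℝ (B u) w : ℝ) ≤ ‖B u‖ * ‖w‖ := real_inner_le_norm _ _
    have h2 : ‖B u‖ * ‖w‖ ≤ (‖B‖ * ‖u‖) * ‖w‖ :=
      mul_le_mul_of_nonneg_right (B.le_opNorm u) (norm_nonneg _)
    have h3 : ‖B‖ * ‖u‖ * ‖w‖ ≤ (1/(2*τ))*‖u‖^2 + (1/(2*σ))*‖w‖^2 :=
      cp_amgm hτ hσ (norm_nonneg _) hτσ.le (norm_nonneg _) (norm_nonneg _)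
    rw [hc, hd]; linarith
  -- per-step key inequality
  have key : ∀ i : ℕ,
      H (p (i+1)) + (inner ℝ (B (p (i+1))) mu : ℝ)
        - (H q + (inner ℝ (B q) (lam (i+1)) : ℝ)) ≤ Ψ i - Ψ (i+1) := by
    intro i
    -- primal variational inequality
    have hsm := cp_strong_min hCconvex hHconvex hτ
      (p i - τ • (ContinuousLinearMap.adjoint B) (lam (i+1))) (p (i+1))
      (hpmem i) (hpmin i) hq
    rw [cp_expand B hτ (p i) (p (i+1)) (lam (i+1)),
      cp_expand B hτ (p i) q (lam (i+1))] at hsm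
    -- dual identity
    have hdual := cp_dual_id hσ (B ((2:ℝ) • p i - p (i - 1))) (lam i) mu
    rw [← hlam i] at hdual
    -- cross identity
    have hcid := cp_cross_id B (p i) (p (i-1)) (p (i+1)) (lam i) (lam (i+1)) mu
    -- inner split
    have hsplit : (inner ℝ (B (p (i+1))) (mu - lam (i+1)) : ℝ)
        = (inner ℝ (B (p (i+1))) mu : ℝ) - (inner ℝ (B (p (i+1))) (lam (i+1)) : ℝ) :=
      inner_sub_right _ _ _
    -- cross-term bound
    have hcb : (inner ℝ (B (p i - p (i-1))) (lam (i+1) - lam i) : ℝ)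
        ≤ c*‖p i - p (i-1)‖^2 + d*‖lam (i+1) - lam i‖^2 :=
      hcross _ _
    have hΨi : Ψ i = c*‖q - p i‖^2 + d*‖mu - lam i‖^2
        + c*‖p i - p (i-1)‖^2 - (inner ℝ (B (p i - p (i-1))) (mu - lam i) : ℝ) := rfl
    have hΨi1 : Ψ (i+1) = c*‖q - p (i+1)‖^2 + d*‖mu - lam (i+1)‖^2
        + c*‖p (i+1) - p i‖^2 - (inner ℝ (B (p (i+1) - p i)) (mu - lam (i+1)) : ℝ) := by
      rw [hΨ]
      simp only [Nat.add_sub_cancel]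
    rw [hΨi, hΨi1]
    have hcmul : c * (2*σ) = c * (2*σ) := rfl
    -- put everything together
    have hd2 : (1/(2*σ)) = d := hd.symm
    rw [hd2] at hdual
    have hc2 : (1/(2*τ)) = c := hc.symm
    rw [hc2] at hsm
    linarith
  -- telescoping sum
  have htel : ∑ i ∈ Finset.range n, (Ψ i - Ψ (i+1)) = Ψ 0 - Ψ n :=
    Finset.sum_range_sub' Ψ n
  have hsum : ∑ i ∈ Finset.range n,
      (H (p (i+1)) + (inner ℝ (B (p (i+1))) mu : ℝ)
        - (H q + (inner ℝ (B q) (lam (i+1)) : ℝ))) ≤ Ψ 0 - Ψ n := by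
    rw [← htel]
    exact Finset.sum_le_sum (fun i _ => key i)
  -- Ψ 0 value
  have hΨ0 : Ψ 0 = c*‖q - p 0‖^2 + d*‖mu - lam 0‖^2 := by
    rw [hΨ]
    simp
  -- Ψ n ≥ 0
  have hΨn : 0 ≤ Ψ n := by
    have h1 : (inner ℝ (B (p n - p (n-1))) (mu - lam n) : ℝ)
        ≤ c*‖p n - p (n-1)‖^2 + d*‖mu - lam n‖^2 := hcross _ _
    have h2 : 0 ≤ c*‖q - p n‖^2 := by positivity
    rw [hΨ]
    simp only
    linarith
  have hsum2 : ∑ i ∈ Finset.range n,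
      (H (p (i+1)) + (inner ℝ (B (p (i+1))) mu : ℝ)
        - (H q + (inner ℝ (B q) (lam (i+1)) : ℝ)))
      ≤ c*‖q - p 0‖^2 + d*‖mu - lam 0‖^2 := by
    rw [hΨ0] at hsum
    linarith
  -- split the sum
  set Sp : Y := ∑ i ∈ Finset.range n, p (i + 1) with hSp
  set Sl : Λ := ∑ i ∈ Finset.range n, lam (i + 1) with hSl
  have hsplitsum : ∑ i ∈ Finset.range n,
      (H (p (i+1)) + (inner ℝ (B (p (i+1))) mu : ℝ)
        - (H q + (inner ℝ (B q) (lam (i+1)) : ℝ)))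
      = (∑ i ∈ Finset.range n, H (p (i+1)))
        + (inner ℝ (B Sp) mu : ℝ) - (n:ℝ) * H q - (inner ℝ (B q) Sl : ℝ) := by
    rw [hSp, hSl, map_sum, sum_inner, inner_sum]
    rw [Finset.sum_sub_distrib, Finset.sum_add_distrib, Finset.sum_add_distrib,
      Finset.sum_const, Finset.card_range]
    push_cast
    ring
  -- membership of average
  have hmem : ((n : ℝ)⁻¹ • Sp) ∈ C := by
    rw [hSp, Finset.smul_sum]
    refine hCconvex.sum_mem (fun i _ => by positivity) ?_ (fun i _ => hpmem i)
    rw [Finset.sum_const, Finset.card_range, nsmul_eq_mul]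
    field_simp
  refine ⟨hmem, ?_⟩
  -- Jensen
  have hjensen : H ((n : ℝ)⁻¹ • Sp) ≤ (n:ℝ)⁻¹ * ∑ i ∈ Finset.range n, H (p (i+1)) := by
    have h1 : H ((n : ℝ)⁻¹ • Sp) = H (∑ i ∈ Finset.range n, (n:ℝ)⁻¹ • p (i+1)) := by
      rw [hSp, Finset.smul_sum]
    rw [h1, Finset.mul_sum]
    have := hHconvex.map_sum_le (t := Finset.range n) (w := fun _ => (n:ℝ)⁻¹)
      (p := fun i => p (i+1)) (fun i _ => by positivity)
      (by rw [Finset.sum_const, Finset.card_range, nsmul_eq_mul]; field_simp)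
      (fun i _ => Set.mem_univ _)
    simpa [smul_eq_mul] using this
  have hBavg : (inner ℝ (B ((n : ℝ)⁻¹ • Sp)) mu : ℝ) = (n:ℝ)⁻¹ * (inner ℝ (B Sp) mu : ℝ) := by
    rw [map_smul]
    exact real_inner_smul_left _ _ _
  have hBqavg : (inner ℝ (B q) ((n : ℝ)⁻¹ • Sl) : ℝ) = (n:ℝ)⁻¹ * (inner ℝ (B q) Sl : ℝ) :=
    real_inner_smul_right _ _ _
  rw [hBavg, hBqavg]
  have hfrac : (1 / (n:ℝ)) = (n:ℝ)⁻¹ := one_div _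
  rw [hfrac]
  -- final assembly
  have hmain : (∑ i ∈ Finset.range n, H (p (i+1)))
      + (inner ℝ (B Sp) mu : ℝ) - (n:ℝ) * H q - (inner ℝ (B q) Sl : ℝ)
      ≤ c*‖q - p 0‖^2 + d*‖mu - lam 0‖^2 := by
    rw [← hsplitsum]; exact hsum2
  have hmono := mul_le_mul_of_nonneg_left hmain (le_of_lt (inv_pos.mpr hn0))
  have hHq : (n:ℝ)⁻¹ * ((n:ℝ) * H q) = H q := by field_simp
  have hcle : c ≤ 1/τ := by
    rw [hc]
    exact one_div_le_one_div_of_le hτ (by linarith)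
  have hdle : d ≤ 1/σ := by
    rw [hd]
    exact one_div_le_one_div_of_le hσ (by linarith)
  have hfin : (n:ℝ)⁻¹ * (c*‖q - p 0‖^2 + d*‖mu - lam 0‖^2)
      ≤ (n:ℝ)⁻¹ * ((1/τ) * ‖q - p 0‖^2 + (1/σ) * ‖mu - lam 0‖^2) := by
    apply mul_le_mul_of_nonneg_left _ (le_of_lt (inv_pos.mpr hn0))
    have h1 : c*‖q - p 0‖^2 ≤ (1/τ)*‖q - p 0‖^2 :=
      mul_le_mul_of_nonneg_right hcle (by positivity)
    have h2 : d*‖mu - lam 0‖^2 ≤ (1/σ)*‖mu - lam 0‖^2 :=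
      mul_le_mul_of_nonneg_right hdle (by positivity)
    linarith
  have hexp : (n:ℝ)⁻¹ * ((∑ i ∈ Finset.range n, H (p (i+1)))
      + (inner ℝ (B Sp) mu : ℝ) - (n:ℝ) * H q - (inner ℝ (B q) Sl : ℝ))
      = (n:ℝ)⁻¹ * (∑ i ∈ Finset.range n, H (p (i+1)))
        + (n:ℝ)⁻¹ * (inner ℝ (B Sp) mu : ℝ) - H q - (n:ℝ)⁻¹ * (inner ℝ (B q) Sl : ℝ) := by
    rw [mul_sub, mul_sub, mul_add, hHq]
  rw [hexp] at hmono
  linarith
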